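/- Let G be a group and H a subgroup hidden by f : G → S (f constant on left cosets of H and distinct across distinct left cosets). For subgroups G₁,…,G_k ≤ G, define f' : G × G₁ × ⋯ × G_k → S × G^k by f'(g, g₁, …, g_k) = (f(g), g·g₁⁻¹, …, g·g_k⁻¹). Then f' is constant on left cosets of the diagonal subgroup D = {(g,g,…,g) : g ∈ H ∩ G₁ ∩ ⋯ ∩ G_k} and takes distinct values on distinct left cosets of D. -/
import Mathlib

/-- If `f` hides `H ≤ G` (i.e. `f x = f y ↔ x⁻¹y ∈ H`), then the function
`f'(g, g₁, …, g_k) = (f g, g·g₁⁻¹, …, g·g_k⁻¹)` on the direct product `G × G₁ × ⋯ × G_k`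
(elements `(g, v)` with `v i ∈ Gᵢ`) hides the diagonal subgroup
`D = {(g,…,g) : g ∈ H ∩ G₁ ∩ ⋯ ∩ G_k}`: two elements have equal `f'`-values iff their
quotient lies in `D`. -/
theorem stmt5 {G S : Type*} [Group G] [Fintype G] (k : ℕ) (H : Subgroup G)
    (Gs : Fin k → Subgroup G) (f : G → S)
    (hf : ∀ x y : G, f x = f y ↔ x⁻¹ * y ∈ H) :
    ∀ (g g' : G) (v v' : Fin k → G),
      (∀ i, v i ∈ Gs i) → (∀ i, v' i ∈ Gs i) →
      ((f g = f g' ∧ ∀ i, g * (v i)⁻¹ = g' * (v' i)⁻¹) ↔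
        (g⁻¹ * g' ∈ H ∧ (∀ i, g⁻¹ * g' ∈ Gs i) ∧ ∀ i, (v i)⁻¹ * v' i = g⁻¹ * g')) := by
  intro g g' v v' hv hv'
  constructor
  · rintro ⟨hfe, he⟩
    have key : ∀ i, (v i)⁻¹ * v' i = g⁻¹ * g' := by
      intro i
      have h := he i
      calc (v i)⁻¹ * v' i = g⁻¹ * (g * (v i)⁻¹) * v' i := by group
        _ = g⁻¹ * (g' * (v' i)⁻¹) * v' i := by rw [h]
        _ = g⁻¹ * g' := by group
    refine ⟨(hf g g').mp hfe, fun i => ?_, key⟩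
    rw [← key i]
    exact mul_mem (inv_mem (hv i)) (hv' i)
  · rintro ⟨hH, _, key⟩
    refine ⟨(hf g g').mpr hH, fun i => ?_⟩
    have := key i
    have : v' i = v i * (g⁻¹ * g') := by rw [← this]; group
    rw [this]; group
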